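/- Let ρ and σ be density matrices on ℂ^d with σ positive definite, and let α > 1 be a real number. Then D_α(ρ‖σ) ≥ 0, equivalently tr(ρ^α σ^{1−α}) ≥ 1, and equality holds if and only if ρ = σ. -/

import Mathlib

open Matrix ComplexOrder

/-- Matrix power via functional calculus on eigenvalues, with the convention `0 ^ β = 0`
(matrices that are not Hermitian are sent to `0`). -/
noncomputable def mpow {d : ℕ} (A : Matrix (Fin d) (Fin d) ℂ) (β : ℝ) :
    Matrix (Fin d) (Fin d) ℂ :=
  if hA : A.IsHermitian then
    (hA.eigenvectorUnitary : Matrix (Fin d) (Fin d) ℂ) *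
      Matrix.diagonal (fun i =>
        ((if hA.eigenvalues i = 0 then (0 : ℝ) else hA.eigenvalues i ^ β : ℝ) : ℂ)) *
      star (hA.eigenvectorUnitary : Matrix (Fin d) (Fin d) ℂ)
  else 0


open Finset in
lemma jensen_eq {d : ℕ} {α : ℝ} (hα : 1 < α) (w z : Fin d → ℝ)
    (hw : ∀ i, 0 ≤ w i) (hw1 : ∑ i, w i = 1) (hz : ∀ i, 0 ≤ z i)
    (heq : ∑ i, w i * z i ^ α ≤ (∑ i, w i * z i) ^ α) :
    ∀ i, w i ≠ 0 → z i = ∑ i, w i * z i := by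
  classical
  set t : Finset (Fin d) := Finset.univ.filter (fun i => w i ≠ 0) with ht
  have hmem : ∀ i, i ∈ t ↔ w i ≠ 0 := by simp [ht]
  have hsub : ∀ (f : Fin d → ℝ), ∑ i ∈ t, w i * f i = ∑ i, w i * f i := by
    intro f
    refine Finset.sum_subset (Finset.subset_univ _) ?_
    intro i _ hi
    have : w i = 0 := by by_contra h; exact hi ((hmem i).2 h)
    simp [this]
  have hw1' : ∑ i ∈ t, w i = 1 := by
    have := hsub (fun _ => 1)
    simpa using this.trans (by simpa using hw1)
  have hconst : ∀ ⦃j⦄, j ∈ t → ∀ ⦃k⦄, k ∈ t → z j = z k := by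
    refine (strictConvexOn_rpow hα).eq_of_le_map_sum
      (fun i hi => lt_of_le_of_ne (hw i) (Ne.symm ((hmem i).1 hi))) hw1'
      (fun i _ => hz i) ?_
    simp only [smul_eq_mul]
    calc ∑ i ∈ t, w i * z i ^ α = ∑ i, w i * z i ^ α := hsub _
      _ ≤ (∑ i, w i * z i) ^ α := heq
      _ = (∑ i ∈ t, w i * z i) ^ α := by rw [hsub]
  intro i hwi
  have hit : i ∈ t := (hmem i).2 hwi
  calc z i = (∑ j ∈ t, w j) * z i := by rw [hw1', one_mul]
    _ = ∑ j ∈ t, w j * z j := by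
        rw [Finset.sum_mul]
        exact Finset.sum_congr rfl fun j hj => by rw [hconst hit hj]
    _ = ∑ j, w j * z j := hsub _

open Finset in
lemma renyi_key {d : ℕ} {α : ℝ} (hα : 1 < α) (p q : Fin d → ℝ) (D : Fin d → Fin d → ℝ)
    (hp : ∀ i, 0 ≤ p i) (hq : ∀ j, 0 < q j) (hp1 : ∑ i, p i = 1) (hq1 : ∑ j, q j = 1)
    (hD : ∀ i j, 0 ≤ D i j) (hrow : ∀ i, ∑ j, D i j = 1) (hcol : ∀ j, ∑ i, D i j = 1) :
    1 ≤ ∑ i, ∑ j, p i ^ α * q j ^ (1 - α) * D i j ∧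
    ((∑ i, ∑ j, p i ^ α * q j ^ (1 - α) * D i j) = 1 →
      ∀ i j, D i j ≠ 0 → p i = q j) := by
  set r : Fin d → ℝ := fun j => ∑ i, D i j * p i with hrdef
  have hr0 : ∀ j, 0 ≤ r j := fun j =>
    Finset.sum_nonneg fun i _ => mul_nonneg (hD i j) (hp i)
  have hrsum : ∑ j, r j = 1 := by
    rw [hrdef]
    rw [Finset.sum_comm]
    calc ∑ i, ∑ j, D i j * p i = ∑ i, (∑ j, D i j) * p i := by
          simp [Finset.sum_mul]
      _ = 1 := by simp only [hrow, one_mul, hp1]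
  have swap : ∑ i, ∑ j, p i ^ α * q j ^ (1 - α) * D i j
      = ∑ j, q j ^ (1 - α) * ∑ i, D i j * p i ^ α := by
    rw [Finset.sum_comm]
    refine Finset.sum_congr rfl fun j _ => ?_
    rw [Finset.mul_sum]
    exact Finset.sum_congr rfl fun i _ => by ring
  have stepA : ∀ j, r j ^ α ≤ ∑ i, D i j * p i ^ α := fun j =>
    Real.rpow_arith_mean_le_arith_mean_rpow Finset.univ (fun i => D i j) p
      (fun i _ => hD i j) (hcol j) (fun i _ => hp i) hα.le
  have hqpow_pos : ∀ j, (0:ℝ) < q j ^ (1 - α) := fun j => Real.rpow_pos_of_pos (hq j) _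
  have keyC : ∀ j, q j ^ (1 - α) * r j ^ α = q j * (r j / q j) ^ α := by
    intro j
    rw [Real.div_rpow (hr0 j) (hq j).le, Real.rpow_sub (hq j), Real.rpow_one]
    have : q j ^ α ≠ 0 := (Real.rpow_pos_of_pos (hq j) α).ne'
    field_simp
  have hmean : ∑ j, q j * (r j / q j) = 1 := by
    rw [← hrsum]
    exact Finset.sum_congr rfl fun j _ => by
      rw [mul_comm, div_mul_cancel₀ _ (hq j).ne']
  have stepD : 1 ≤ ∑ j, q j * (r j / q j) ^ α := by
    have h := Real.rpow_arith_mean_le_arith_mean_rpow Finset.univ q (fun j => r j / q j)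
      (fun j _ => (hq j).le) hq1 (fun j _ => div_nonneg (hr0 j) (hq j).le) hα.le
    rw [hmean, Real.one_rpow] at h
    exact h
  have stepB : ∑ j, q j * (r j / q j) ^ α ≤ ∑ j, q j ^ (1 - α) * ∑ i, D i j * p i ^ α := by
    refine Finset.sum_le_sum fun j _ => ?_
    rw [← keyC j]
    exact mul_le_mul_of_nonneg_left (stepA j) (hqpow_pos j).le
  constructor
  · rw [swap]; exact stepD.trans stepB
  · intro hS i j hDij
    rw [swap] at hS
    have hM1 : ∑ j, q j * (r j / q j) ^ α = 1 := by
      have h := stepB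
      rw [hS] at h
      linarith [stepD]
    have houter : ∀ j, r j = q j := by
      have hj := jensen_eq hα q (fun j => r j / q j) (fun j => (hq j).le) hq1
        (fun j => div_nonneg (hr0 j) (hq j).le)
        (by rw [hmean, Real.one_rpow, hM1])
      intro j
      have h2 := hj j (hq j).ne'
      rw [hmean] at h2
      rwa [div_eq_one_iff_eq (hq j).ne'] at h2
    have hle : ∀ k ∈ Finset.univ, q k ^ (1 - α) * r k ^ α
        ≤ q k ^ (1 - α) * ∑ i, D i k * p i ^ α := fun k _ =>
      mul_le_mul_of_nonneg_left (stepA k) (hqpow_pos k).le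
    have hsum_eq : ∑ k, q k ^ (1 - α) * r k ^ α
        = ∑ k, q k ^ (1 - α) * ∑ i, D i k * p i ^ α := by
      have h1 : ∑ k, q k ^ (1 - α) * r k ^ α = ∑ j, q j * (r j / q j) ^ α :=
        Finset.sum_congr rfl fun k _ => keyC k
      have h3 : ∑ k, q k ^ (1 - α) * r k ^ α
          ≤ ∑ k, q k ^ (1 - α) * ∑ i, D i k * p i ^ α := Finset.sum_le_sum hle
      rw [hS]
      rw [hS] at h3
      rw [h1, hM1]
    have hinner : r j ^ α = ∑ i, D i j * p i ^ α :=
      mul_left_cancel₀ (hqpow_pos j).ne'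
        ((Finset.sum_eq_sum_iff_of_le hle).1 hsum_eq j (Finset.mem_univ j))
    have hjj := jensen_eq hα (fun i => D i j) p (fun i => hD i j) (hcol j) hp
      (le_of_eq hinner.symm)
    exact (hjj i hDij).trans (houter j)

lemma mpow_eq {d : ℕ} {A : Matrix (Fin d) (Fin d) ℂ} (hA : A.IsHermitian) {β : ℝ}
    (hβ : β ≠ 0) :
    mpow A β = (hA.eigenvectorUnitary : Matrix (Fin d) (Fin d) ℂ) *
      Matrix.diagonal (fun i => ((hA.eigenvalues i ^ β : ℝ) : ℂ)) *
      star (hA.eigenvectorUnitary : Matrix (Fin d) (Fin d) ℂ) := by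
  rw [mpow, dif_pos hA]
  have h : (fun i => ((if hA.eigenvalues i = 0 then (0:ℝ) else hA.eigenvalues i ^ β : ℝ) : ℂ))
      = fun i => ((hA.eigenvalues i ^ β : ℝ) : ℂ) := by
    funext i
    split_ifs with h
    · rw [h, Real.zero_rpow hβ]
    · rfl
  rw [h]

lemma trace_aux {d : ℕ} (U V : Matrix (Fin d) (Fin d) ℂ) (f g : Fin d → ℂ) :
    (U * Matrix.diagonal f * star U * (V * Matrix.diagonal g * star V)).trace
      = ∑ i, ∑ j, f i * g j * ((‖(star U * V) i j‖ ^ 2 : ℝ) : ℂ) := by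
  have h1 : U * Matrix.diagonal f * star U * (V * Matrix.diagonal g * star V)
      = (U * Matrix.diagonal f * star U * V * Matrix.diagonal g) * star V := by
    simp only [Matrix.mul_assoc]
  rw [h1, Matrix.trace_mul_comm]
  have h2 : star V * (U * Matrix.diagonal f * star U * V * Matrix.diagonal g)
      = star (star U * V) * Matrix.diagonal f * (star U * V) * Matrix.diagonal g := by
    simp only [Matrix.star_mul, star_star, Matrix.mul_assoc]
  rw [h2]
  set W := star U * V with hW
  have entry : ∀ k, (star W * Matrix.diagonal f * W * Matrix.diagonal g) k k
      = ∑ i, f i * g k * ((‖W i k‖ ^ 2 : ℝ) : ℂ) := by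
    intro k
    rw [Matrix.mul_diagonal, Matrix.mul_apply, Finset.sum_mul]
    refine Finset.sum_congr rfl fun i _ => ?_
    rw [Matrix.mul_diagonal, Matrix.star_apply]
    have hc : star (W i k) * W i k = ((‖W i k‖ ^ 2 : ℝ) : ℂ) := by
      rw [RCLike.star_def, mul_comm, Complex.mul_conj']
      push_cast
      ring
    rw [show star (W i k) * f i * W i k * g k = f i * g k * (star (W i k) * W i k) from by ring,
      hc]
  calc (star W * Matrix.diagonal f * W * Matrix.diagonal g).trace
      = ∑ k, ∑ i, f i * g k * ((‖W i k‖ ^ 2 : ℝ) : ℂ) := by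
        rw [Matrix.trace]
        exact Finset.sum_congr rfl fun k _ => entry k
    _ = ∑ i, ∑ j, f i * g j * ((‖W i j‖ ^ 2 : ℝ) : ℂ) := Finset.sum_comm

lemma col_sum {d : ℕ} (W : Matrix (Fin d) (Fin d) ℂ) (h : star W * W = 1) (j : Fin d) :
    ∑ i, ‖W i j‖ ^ 2 = 1 := by
  have h2 : (star W * W) j j = 1 := by rw [h, Matrix.one_apply_eq]
  rw [Matrix.mul_apply] at h2
  have h3 : ∑ i, (star W) j i * W i j = ((∑ i, ‖W i j‖ ^ 2 : ℝ) : ℂ) := by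
    push_cast
    refine Finset.sum_congr rfl fun i _ => ?_
    rw [Matrix.star_apply, RCLike.star_def, mul_comm, Complex.mul_conj']
  rw [h3] at h2
  exact_mod_cast h2

lemma row_sum {d : ℕ} (W : Matrix (Fin d) (Fin d) ℂ) (h : W * star W = 1) (i : Fin d) :
    ∑ j, ‖W i j‖ ^ 2 = 1 := by
  have h2 : (W * star W) i i = 1 := by rw [h, Matrix.one_apply_eq]
  rw [Matrix.mul_apply] at h2
  have h3 : ∑ j, W i j * (star W) j i = ((∑ j, ‖W i j‖ ^ 2 : ℝ) : ℂ) := by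
    push_cast
    refine Finset.sum_congr rfl fun j _ => ?_
    rw [Matrix.star_apply, RCLike.star_def, Complex.mul_conj']
  rw [h3] at h2
  exact_mod_cast h2

lemma trace_spectral {d : ℕ} (A : Matrix (Fin d) (Fin d) ℂ) (hA : A.IsHermitian) :
    A.trace = ((∑ i, hA.eigenvalues i : ℝ) : ℂ) := by
  conv_lhs => rw [hA.spectral_theorem]
  rw [Unitary.conjStarAlgAut_apply, Matrix.trace_mul_cycle,
    Matrix.mem_unitaryGroup_iff'.mp hA.eigenvectorUnitary.2, one_mul,
    Matrix.trace_diagonal]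
  push_cast
  rfl

/-- **Positivity of the relative Rényi `α`-entropy.**
For density matrices `ρ, σ` with `σ` positive definite and `α > 1`:
`D_α(ρ‖σ) = (1/(α−1)) log₂ tr(ρ^α σ^{1−α}) ≥ 0`, equivalently `tr(ρ^α σ^{1−α}) ≥ 1`,
with equality iff `ρ = σ`. -/
theorem renyi_relative_entropy_nonneg
    (d : ℕ) (ρ σ : Matrix (Fin d) (Fin d) ℂ)
    (hρ_psd : ρ.PosSemidef) (hρ_tr : ρ.trace = 1)
    (hσ_pd : σ.PosDef) (hσ_tr : σ.trace = 1)
    (α : ℝ) (hα : 1 < α) :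
    0 ≤ (1 / (α - 1)) * Real.logb 2 ((mpow ρ α * mpow σ (1 - α)).trace).re ∧
    1 ≤ ((mpow ρ α * mpow σ (1 - α)).trace).re ∧
    (((mpow ρ α * mpow σ (1 - α)).trace).re = 1 ↔ ρ = σ) := by
  have hρ : ρ.IsHermitian := hρ_psd.1
  have hσ : σ.IsHermitian := hσ_pd.1
  have hα0 : α ≠ 0 := by linarith
  have hβ0 : (1 : ℝ) - α ≠ 0 := by intro h; linarith [sub_eq_zero.mp h]
  set U : Matrix (Fin d) (Fin d) ℂ := (hρ.eigenvectorUnitary : Matrix (Fin d) (Fin d) ℂ)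
    with hUdef
  set V : Matrix (Fin d) (Fin d) ℂ := (hσ.eigenvectorUnitary : Matrix (Fin d) (Fin d) ℂ)
    with hVdef
  set p : Fin d → ℝ := hρ.eigenvalues with hpdef
  set q : Fin d → ℝ := hσ.eigenvalues with hqdef
  have hUU : star U * U = 1 := Matrix.mem_unitaryGroup_iff'.mp hρ.eigenvectorUnitary.2
  have hU'U : U * star U = 1 := Matrix.mem_unitaryGroup_iff.mp hρ.eigenvectorUnitary.2
  have hVV : star V * V = 1 := Matrix.mem_unitaryGroup_iff'.mp hσ.eigenvectorUnitary.2
  have hV'V : V * star V = 1 := Matrix.mem_unitaryGroup_iff.mp hσ.eigenvectorUnitary.2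
  set W : Matrix (Fin d) (Fin d) ℂ := star U * V with hWdef
  have hWW : star W * W = 1 := by
    rw [hWdef, Matrix.star_mul, star_star, Matrix.mul_assoc, ← Matrix.mul_assoc U,
      hU'U, one_mul, hVV]
  have hW'W : W * star W = 1 := by
    rw [hWdef, Matrix.star_mul, star_star, Matrix.mul_assoc, ← Matrix.mul_assoc V,
      hV'V, one_mul, hUU]
  have hp : ∀ i, 0 ≤ p i := fun i => hρ_psd.eigenvalues_nonneg i
  have hq : ∀ j, 0 < q j := fun j => hσ_pd.eigenvalues_pos j
  have hp1 : ∑ i, p i = 1 := by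
    have := (trace_spectral ρ hρ).symm.trans hρ_tr
    exact_mod_cast this
  have hq1 : ∑ j, q j = 1 := by
    have := (trace_spectral σ hσ).symm.trans hσ_tr
    exact_mod_cast this
  -- the trace formula
  have htr : ((mpow ρ α * mpow σ (1 - α)).trace)
      = ((∑ i, ∑ j, p i ^ α * q j ^ (1 - α) * ‖W i j‖ ^ 2 : ℝ) : ℂ) := by
    rw [mpow_eq hρ hα0, mpow_eq hσ hβ0, trace_aux]
    push_cast
    rfl
  have hre : ((mpow ρ α * mpow σ (1 - α)).trace).re
      = ∑ i, ∑ j, p i ^ α * q j ^ (1 - α) * ‖W i j‖ ^ 2 := by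
    rw [htr, Complex.ofReal_re]
  obtain ⟨hge, hequal⟩ := renyi_key hα p q (fun i j => ‖W i j‖ ^ 2)
    hp hq hp1 hq1 (fun i j => by positivity)
    (fun i => row_sum W hW'W i) (fun j => col_sum W hWW j)
  have hge' : 1 ≤ ((mpow ρ α * mpow σ (1 - α)).trace).re := by rw [hre]; exact hge
  -- spectral theorems with ℂ coercion
  have hρspec : ρ = U * Matrix.diagonal (fun i => (p i : ℂ)) * star U := by
    conv_lhs => rw [hρ.spectral_theorem]
    rfl
  have hσspec : σ = V * Matrix.diagonal (fun j => (q j : ℂ)) * star V := by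
    conv_lhs => rw [hσ.spectral_theorem]
    rfl
  refine ⟨?_, hge', ?_, ?_⟩
  · apply mul_nonneg
    · exact div_nonneg zero_le_one (by linarith)
    · exact Real.logb_nonneg one_lt_two hge'
  · -- equality implies ρ = σ
    intro h1
    rw [hre] at h1
    have hpq : ∀ i j, ‖W i j‖ ^ 2 ≠ 0 → p i = q j := hequal h1
    have hdiag : Matrix.diagonal (fun i => (p i : ℂ)) * W
        = W * Matrix.diagonal (fun j => (q j : ℂ)) := by
      ext i j
      rw [Matrix.diagonal_mul, Matrix.mul_diagonal]
      by_cases h : W i j = 0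
      · rw [h, mul_zero, zero_mul]
      · have hnz : ‖W i j‖ ^ 2 ≠ 0 := pow_ne_zero _ (norm_ne_zero_iff.2 h)
        rw [hpq i j hnz, mul_comm]
    have h5 : ρ * V = V * Matrix.diagonal (fun j => (q j : ℂ)) := by
      calc ρ * V = U * (Matrix.diagonal (fun i => (p i : ℂ)) * W) := by
            rw [hρspec, hWdef]; simp only [Matrix.mul_assoc]
        _ = U * (W * Matrix.diagonal (fun j => (q j : ℂ))) := by rw [hdiag]
        _ = (U * star U) * (V * Matrix.diagonal (fun j => (q j : ℂ))) := by
            rw [hWdef]; simp only [Matrix.mul_assoc]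
        _ = V * Matrix.diagonal (fun j => (q j : ℂ)) := by rw [hU'U, one_mul]
    calc ρ = ρ * (V * star V) := by rw [hV'V, mul_one]
      _ = (ρ * V) * star V := by rw [Matrix.mul_assoc]
      _ = V * Matrix.diagonal (fun j => (q j : ℂ)) * star V := by rw [h5]
      _ = σ := hσspec.symm
  · -- ρ = σ implies equality
    intro h
    subst h
    have h6 : mpow ρ α * mpow ρ (1 - α) = ρ := by
      rw [mpow_eq hρ hα0, mpow_eq hρ hβ0]
      calc (U * Matrix.diagonal (fun i => ((p i ^ α : ℝ) : ℂ)) * star U) *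
            (U * Matrix.diagonal (fun i => ((p i ^ (1 - α) : ℝ) : ℂ)) * star U)
          = U * (Matrix.diagonal (fun i => ((p i ^ α : ℝ) : ℂ)) * (star U * U) *
              Matrix.diagonal (fun i => ((p i ^ (1 - α) : ℝ) : ℂ))) * star U := by
            simp only [Matrix.mul_assoc]
        _ = U * Matrix.diagonal (fun i => (p i : ℂ)) * star U := by
            rw [hUU, Matrix.mul_one, Matrix.diagonal_mul_diagonal]
            have hfun : (fun i => ((p i ^ α : ℝ) : ℂ) * ((p i ^ (1 - α) : ℝ) : ℂ))
                = fun i => ((p i : ℝ) : ℂ) := by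
              funext i
              rw [← Complex.ofReal_mul, ← Real.rpow_add (hq i),
                show α + (1 - α) = 1 by ring, Real.rpow_one]
            rw [hfun]
        _ = ρ := hρspec.symm
    rw [h6, hρ_tr, Complex.one_re]
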